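/- Let ℓ be differentiable, convex, L-Lipschitz (so ‖∇ℓ(w)‖ ≤ L), satisfy the interpolation condition ℓ(w*) ≤ ℓ(w) for all w, and the order-1 strong convexity bound −⟨∇ℓ(w), w − w*⟩ ≤ ℓ(w*) − ℓ(w) − (μ/2)‖w − w*‖. Then for the update w' = w − η·c₁‖w − w*‖·∇ℓ(w), we have ‖w' − w*‖² ≤ (1 − μηc₁ + η²c₁²L²)‖w − w*‖². -/
import Mathlib


open scoped RealInnerProductSpace

theorem one_step_contraction {n : ℕ} (ℓ : EuclideanSpace ℝ (Fin n) → ℝ)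
    (hdiff : Differentiable ℝ ℓ) (hconv : ConvexOn ℝ Set.univ ℓ)
    (L μ η c₁ : ℝ) (hL : 0 < L) (hμ : 0 ≤ μ) (hη : 0 < η) (hc₁ : 0 < c₁)
    (w wstar : EuclideanSpace ℝ (Fin n))
    (hLip : ∀ v, ‖gradient ℓ v‖ ≤ L)
    (hinterp : ∀ v, ℓ wstar ≤ ℓ v)
    (hsc : -⟪gradient ℓ w, w - wstar⟫ ≤ ℓ wstar - ℓ w - (μ / 2) * ‖w - wstar‖) :
    ‖(w - (η * (c₁ * ‖w - wstar‖)) • gradient ℓ w) - wstar‖ ^ 2 ≤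
      (1 - μ * η * c₁ + η ^ 2 * c₁ ^ 2 * L ^ 2) * ‖w - wstar‖ ^ 2 := by
  set g := gradient ℓ w
  set r := ‖w - wstar‖ with hr
  set t := η * (c₁ * r) with ht
  have hr0 : 0 ≤ r := norm_nonneg _
  have ht0 : 0 ≤ t := by positivity
  have hgr : (μ / 2) * r ≤ ⟪g, w - wstar⟫ := by
    have := hinterp w
    linarith [hsc]
  have key : (w - t • g) - wstar = (w - wstar) - t • g := by
    abel
  rw [key, norm_sub_sq_real, real_inner_smul_right, norm_smul, Real.norm_eq_abs,
    abs_of_nonneg ht0, mul_pow]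
  have h1 : 2 * (t * ⟪g, w - wstar⟫) ≥ 2 * t * ((μ / 2) * r) := by
    have := mul_le_mul_of_nonneg_left hgr ht0
    nlinarith
  have h2 : t ^ 2 * ‖g‖ ^ 2 ≤ t ^ 2 * L ^ 2 := by
    apply mul_le_mul_of_nonneg_left _ (by positivity)
    have := hLip w
    nlinarith [norm_nonneg g]
  have ht2 : t ^ 2 = η ^ 2 * c₁ ^ 2 * r ^ 2 := by rw [ht]; ring
  have h3 : 2 * t * ((μ / 2) * r) = μ * η * c₁ * r ^ 2 := by rw [ht]; ring
  rw [real_inner_comm, ← hr]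
  nlinarith [h1, h2, h3, ht2]
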